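/- arXiv:1203.0140 — 3 statements merged into one kernel-verified Lean document; each statement's English description precedes it below -/
import Mathlib

section
/- Let T be a directed tree, let {λ_v}_{v∈V°} be complex numbers, {ε_u}_{u∈V} nonnegative reals and {μ_u}_{u∈V} Borel probability measures on ℝ₊ satisfying the consistency equation at every u ∈ V. Then: (i) for every u ∈ V, Σ_{v∈Chi(u)} |λ_v|² ∫_0^∞ (1/s) dμ_v(s) ≤ 1 and ε_u = 1 − Σ_{v∈Chi(u)} |λ_v|² ∫_0^∞ (1/s) dμ_v(s); (ii) for every u ∈ V, μ_u({0}) = 0 if and only if ε_u = 0; (iii) for every v ∈ V°, if λ_v ≠ 0 then μ_v({0}) = 0; (iv) for every u ∈ V and every integer n ≥ 1, μ_u(σ) = Σ_{v∈Chi^⟨n⟩(u)} |λ_{u|v}|² ∫_σ (1/sⁿ) dμ_v(s) + ε_u δ₀(σ) for all Borel σ ⊆ ℝ₊. -/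
open Filter
open scoped ENNReal InnerProductSpace ComplexConjugate

attribute [local instance] Classical.propDecidable

noncomputable section

namespace Paper

universe u

/-- A directed tree: a directed graph which is connected (as an undirected graph), has no
(directed) circuits, and in which every vertex has at most one parent. -/
structure DirectedTree (V : Type*) where
  E : V → V → Prop
  connected : ∀ u v : V, Relation.ReflTransGen (fun a b => E a b ∨ E b a) u v
  noCircuits : ∀ v : V, ¬ Relation.TransGen E v v
  par_unique : ∀ ⦃u₁ u₂ v : V⦄, E u₁ v → E u₂ v → u₁ = u₂

namespace DirectedTree

variable {V : Type*} (t : DirectedTree V)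

/-- The set of children of a vertex. -/
def chi (u : V) : Set V := {v | t.E u v}

/-- `v` has a parent, i.e. `v ∈ V°`. -/
def hasPar (v : V) : Prop := ∃ u, t.E u v

/-- The parent partial function, as a total function with junk value `v` at parentless
vertices. -/
noncomputable def par (v : V) : V := if h : t.hasPar v then h.choose else v

/-- Children of a set of vertices. -/
def chiSet (W : Set V) : Set V := {v | ∃ u ∈ W, t.E u v}

/-- `n`-fold children of a set of vertices. -/
def chiIter : ℕ → Set V → Set V
  | 0, W => W
  | n + 1, W => t.chiSet (chiIter n W)

/-- `Chi^⟨n⟩(u)`. -/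
def chin (n : ℕ) (u : V) : Set V := t.chiIter n {u}

/-- The descendants of a vertex. -/
def des (u : V) : Set V := ⋃ n : ℕ, t.chin n u

/-- `λ_{u∣v} = ∏_{j=0}^{n-1} λ_{par^j(v)}` for `v ∈ Chi^⟨n⟩(u)`. -/
noncomputable def wprod (lam : V → ℂ) (n : ℕ) (v : V) : ℂ :=
  ∏ j ∈ Finset.range n, lam (t.par^[j] v)

end DirectedTree

/-- The Hilbert space `ℓ²(V)`. -/
abbrev H2 (V : Type*) := lp (fun _ : V => ℂ) 2

/-- The basis vector `e_u ∈ ℓ²(V)`. -/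
noncomputable def evec {V : Type*} (u : V) : H2 V :=
  haveI := Classical.decEq V
  lp.single 2 u 1

/-- The linear subspace `E = lin{e_u : u ∈ V}`. -/
noncomputable def espan (V : Type*) : Submodule ℂ (H2 V) :=
  Submodule.span ℂ (Set.range (evec : V → H2 V))

/-- The map `Λ_T` on all functions `V → ℂ`:
`(Λ_T f)(v) = λ_v f(par(v))` for `v ∈ V°` and `0` at the root. -/
noncomputable def lamLin {V : Type*} (t : DirectedTree V) (lam : V → ℂ) :
    (V → ℂ) →ₗ[ℂ] (V → ℂ) where
  toFun f := fun v => if t.hasPar v then lam v * f (t.par v) else 0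
  map_add' f g := by
    funext v
    by_cases h : t.hasPar v <;> simp [h, mul_add]
  map_smul' c f := by
    funext v
    by_cases h : t.hasPar v <;> simp [h] <;> ring

/-- The domain `{f ∈ ℓ²(V) : Λ_T f ∈ ℓ²(V)}` of the weighted shift. -/
noncomputable def shiftDom {V : Type*} (t : DirectedTree V) (lam : V → ℂ) :
    Submodule ℂ (H2 V) where
  carrier := {f | Memℓp (lamLin t lam f) 2}
  zero_mem' := by
    simpa only [Set.mem_setOf_eq, lp.coeFn_zero, map_zero] using zero_memℓp
  add_mem' := by
    intro f g hf hg
    simp only [Set.mem_setOf_eq, lp.coeFn_add, map_add] at *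
    exact hf.add hg
  smul_mem' := by
    intro c f hf
    simp only [Set.mem_setOf_eq] at hf ⊢
    rw [lp.coeFn_smul, LinearMap.map_smul]
    exact hf.const_smul c

/-- The weighted shift `S_λ` on the directed tree `T`, as an unbounded operator in `ℓ²(V)`. -/
noncomputable def shift {V : Type*} (t : DirectedTree V) (lam : V → ℂ) :
    H2 V →ₗ.[ℂ] H2 V where
  domain := shiftDom t lam
  toFun :=
    { toFun := fun f => (⟨lamLin t lam f, f.2⟩ : H2 V)
      map_add' := by
        intro f g
        apply lp.ext
        simp only [Submodule.coe_add, lp.coeFn_add, map_add]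
      map_smul' := by
        intro c f
        apply lp.ext
        simp only [SetLike.val_smul, lp.coeFn_smul, LinearMap.map_smul, RingHom.id_apply] }

section Operator

variable {H : Type*} [NormedAddCommGroup H] [InnerProductSpace ℂ H]

/-- `x ∈ D(Tⁿ)`. -/
def iterMem (T : H →ₗ.[ℂ] H) : ℕ → H → Prop
  | 0, _ => True
  | n + 1, x => ∃ h : x ∈ T.domain, iterMem T n (T ⟨x, h⟩)

/-- `Tⁿ x` (junk value `0` if undefined along the way). -/
noncomputable def iterApp (T : H →ₗ.[ℂ] H) : ℕ → H → H
  | 0, x => x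
  | n + 1, x => if h : x ∈ T.domain then iterApp T n (T ⟨x, h⟩) else 0

/-- The inner product in the paper's convention: `⟨x, y⟩` is linear in `x`. -/
noncomputable def pinner (x y : H) : ℂ := inner (𝕜 := ℂ) y x

/-- `E ⊆ D∞(S_λ)` where `E = lin{e_u : u ∈ V}`. -/
def spanDomInfty {V : Type*} (t : DirectedTree V) (lam : V → ℂ) : Prop :=
  ∀ f ∈ espan V, ∀ n : ℕ, iterMem (shift t lam) n f

/-- A linear subspace `F` is a core of `T` if the graph of `T` is contained in the closure of
the graph of `T|_F`. -/
def IsCore (T : H →ₗ.[ℂ] H) (F : Submodule ℂ H) : Prop :=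
  (T.graph : Set (H × H)) ⊆ closure ((T.domRestrict F).graph : Set (H × H))

/-- `f` is a quasi-analytic vector of `T`:
`f ∈ D∞(T)` and `∑_{n ≥ 1} ‖Tⁿ f‖^{-1/n} = ∞` (convention `1/0 = ∞`). -/
def QuasiAnalyticVec (T : H →ₗ.[ℂ] H) (f : H) : Prop :=
  (∀ n : ℕ, iterMem T n f) ∧
    ∑' n : ℕ, (ENNReal.ofReal (‖iterApp T (n + 1) f‖ ^ (1 / (n + 1 : ℝ))))⁻¹ = ∞

end Operator

section NormalSubnormal

/-- A normal operator: closed, densely defined, with `D(N) = D(N*)` and `‖N* h‖ = ‖N h‖` on the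
common domain. -/
structure IsNormalOp {K : Type*} [NormedAddCommGroup K] [InnerProductSpace ℂ K]
    [CompleteSpace K] (N : K →ₗ.[ℂ] K) : Prop where
  dense : Dense (N.domain : Set K)
  isClosed : N.IsClosed
  dom_adjoint : N.adjoint.domain = N.domain
  norm_adjoint : ∀ (x : K) (hx : x ∈ N.domain) (hx' : x ∈ N.adjoint.domain),
    ‖N.adjoint ⟨x, hx'⟩‖ = ‖N ⟨x, hx⟩‖

/-- A normal extension of `S`: a Hilbert space `K`, an isometric linear embedding `J : H → K`,
and a normal operator `N` in `K` with `N (J h) = J (S h)` for all `h ∈ D(S)`. -/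
structure NormalExtension {H : Type u} [NormedAddCommGroup H] [InnerProductSpace ℂ H]
    (S : H →ₗ.[ℂ] H) : Type (u + 1) where
  K : Type u
  [instNG : NormedAddCommGroup K]
  [instIP : InnerProductSpace ℂ K]
  [instCS : CompleteSpace K]
  J : H →ₗᵢ[ℂ] K
  N : K →ₗ.[ℂ] K
  normal : IsNormalOp N
  ext_prop : ∀ x : S.domain, ∃ hx : J x ∈ N.domain, N ⟨J x, hx⟩ = J (S x)

/-- A densely defined operator is subnormal if it has a normal extension. -/
def Subnormal {H : Type u} [NormedAddCommGroup H] [InnerProductSpace ℂ H]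
    (S : H →ₗ.[ℂ] H) : Prop :=
  Dense (S.domain : Set H) ∧ Nonempty (NormalExtension S)

/-- A hyponormal operator: densely defined, `D(S) ⊆ D(S*)` and `‖S* f‖ ≤ ‖S f‖` on `D(S)`. -/
def Hyponormal {H : Type*} [NormedAddCommGroup H] [InnerProductSpace ℂ H] [CompleteSpace H]
    (S : H →ₗ.[ℂ] H) : Prop :=
  Dense (S.domain : Set H) ∧ S.domain ≤ S.adjoint.domain ∧
    ∀ (x : H) (hx : x ∈ S.domain) (hx' : x ∈ S.adjoint.domain),
      ‖S.adjoint ⟨x, hx'⟩‖ ≤ ‖S ⟨x, hx⟩‖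

end NormalSubnormal

section Stieltjes

open MeasureTheory

/-- `μ` is a representing measure of `{t_n}`: a positive Borel measure on `ℝ₊`
with `t_n = ∫_0^∞ sⁿ dμ(s)` for all `n`. -/
def IsRepMeasure (μ : Measure ℝ) (t : ℕ → ℝ) : Prop :=
  μ (Set.Iio 0) = 0 ∧ ∀ n : ℕ, Integrable (fun s => s ^ n) μ ∧ t n = ∫ s, s ^ n ∂μ

/-- `{t_n}` is a Stieltjes moment sequence. -/
def IsStieltjes (t : ℕ → ℝ) : Prop := ∃ μ : Measure ℝ, IsRepMeasure μ t

/-- A Stieltjes moment sequence is determinate if it has only one representing measure. -/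
def Determinate (t : ℕ → ℝ) : Prop :=
  ∀ ⦃μ ν : Measure ℝ⦄, IsRepMeasure μ t → IsRepMeasure ν t → μ = ν

/-- `∫_σ (1/s) dμ(s)`, with the convention `1/0 = ∞`. -/
noncomputable def recipInt (μ : Measure ℝ) (σ : Set ℝ) : ℝ≥0∞ :=
  ∫⁻ s in σ, (ENNReal.ofReal s)⁻¹ ∂μ

/-- The sequence `(θ, t_0, t_1, …)`. -/
def prepend (θ : ℝ) (t : ℕ → ℝ) : ℕ → ℝ
  | 0 => θ
  | n + 1 => t n

/-- `{t_n}` is positive definite. -/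
def PosDefSeq (t : ℕ → ℝ) : Prop :=
  ∀ (n : ℕ) (α : ℕ → ℂ),
    0 ≤ (∑ k ∈ Finset.range (n + 1), ∑ l ∈ Finset.range (n + 1),
      (t (k + l) : ℂ) * α k * (starRingEnd ℂ) (α l)).re

/-- The measure `ν_μ(σ) = ∫_σ (1/s) dμ(s) + (θ − ∫_0^∞ (1/s) dμ(s)) δ₀(σ)`. -/
noncomputable def numap (θ : ℝ) (μ : Measure ℝ) : Measure ℝ :=
  μ.withDensity (fun s => (ENNReal.ofReal s)⁻¹) +
    (ENNReal.ofReal θ - recipInt μ Set.univ) • Measure.dirac (0 : ℝ)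

/-- The measure `μ_ν(σ) = ∫_σ s dν(s)`. -/
noncomputable def mumap (ν : Measure ℝ) : Measure ℝ :=
  ν.withDensity fun s => ENNReal.ofReal s

end Stieltjes

section Consistency

open MeasureTheory

variable {V : Type*}

/-- The consistency condition \eqref{muu+} at the vertex `u`:
`μ_u(σ) = Σ_{v ∈ Chi(u)} |λ_v|² ∫_σ (1/s) dμ_v(s) + ε_u δ₀(σ)`. -/
def Consistent (t : DirectedTree V) (lam : V → ℂ) (μ : V → Measure ℝ) (ε : V → ℝ)
    (u : V) : Prop :=
  ∀ σ : Set ℝ, MeasurableSet σ →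
    μ u σ = (∑' v : t.chi u, ENNReal.ofReal (‖lam (v : V)‖ ^ 2) * recipInt (μ (v : V)) σ)
      + ENNReal.ofReal (ε u) * Measure.dirac (0 : ℝ) σ

/-- The measure `μ_u` from Lemma charsub2, built from the children measures:
`μ_u(σ) = Σ_{v ∈ Chi(u)} |λ_v|² ∫_σ (1/s) dμ_v(s) + ε_u δ₀(σ)` with
`ε_u = 1 − Σ_{v ∈ Chi(u)} |λ_v|² ∫_0^∞ (1/s) dμ_v(s)`. -/
noncomputable def consMeasure (t : DirectedTree V) (lam : V → ℂ) (μ : V → Measure ℝ)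
    (u : V) : Measure ℝ :=
  Measure.sum (fun v : t.chi u =>
      ENNReal.ofReal (‖lam (v : V)‖ ^ 2) •
        (μ (v : V)).withDensity fun s => (ENNReal.ofReal s)⁻¹) +
    (1 - ∑' v : t.chi u, ENNReal.ofReal (‖lam (v : V)‖ ^ 2) * recipInt (μ (v : V)) Set.univ) •
      Measure.dirac (0 : ℝ)

end Consistency

end Paper

open Paper MeasureTheory Filter
open scoped ENNReal


/-- properties of consistent systems of probability measures. -/
theorem stmt14 {V : Type*} (t : Paper.DirectedTree V) (lam : V → ℂ)
    (μ : V → Measure ℝ) (ε : V → ℝ)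
    (hprob : ∀ u : V, IsProbabilityMeasure (μ u)) (hpos : ∀ u : V, μ u (Set.Iio 0) = 0)
    (hε : ∀ u : V, 0 ≤ ε u) (hcons : ∀ u : V, Consistent t lam μ ε u) :
    (∀ u : V,
      (∑' v : t.chi u, ENNReal.ofReal (‖lam (v : V)‖ ^ 2) * recipInt (μ (v : V)) Set.univ) ≤ 1 ∧
      ENNReal.ofReal (ε u)
        = 1 - ∑' v : t.chi u,
            ENNReal.ofReal (‖lam (v : V)‖ ^ 2) * recipInt (μ (v : V)) Set.univ) ∧
    (∀ u : V, μ u {0} = 0 ↔ ε u = 0) ∧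
    (∀ v : V, t.hasPar v → lam v ≠ 0 → μ v {0} = 0) ∧
    (∀ (u : V) (n : ℕ), 1 ≤ n → ∀ σ : Set ℝ, MeasurableSet σ →
      μ u σ = (∑' v : t.chin n u, ENNReal.ofReal (‖t.wprod lam n (v : V)‖ ^ 2) *
          ∫⁻ s in σ, (ENNReal.ofReal s ^ n)⁻¹ ∂(μ (v : V)))
        + ENNReal.ofReal (ε u) * Measure.dirac (0 : ℝ) σ) := by

  classical
  -- recipInt at the singleton {0}
  have hsing : ∀ w : V, recipInt (μ w) {0} = ⊤ * μ w {0} := by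
    intro w
    rw [recipInt, MeasureTheory.lintegral_singleton]
    simp
  -- consistency at univ
  have keyA : ∀ u : V,
      (∑' v : t.chi u, ENNReal.ofReal (‖lam (v : V)‖ ^ 2) * recipInt (μ (v : V)) Set.univ)
        + ENNReal.ofReal (ε u) = 1 := by
    intro u
    have h := hcons u Set.univ MeasurableSet.univ
    simpa [measure_univ] using h.symm
  have hS_le : ∀ u : V,
      (∑' v : t.chi u, ENNReal.ofReal (‖lam (v : V)‖ ^ 2) * recipInt (μ (v : V)) Set.univ)
        ≤ 1 := by
    intro u
    rw [← keyA u]; exact le_self_add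
  -- key lemma B : value at {0} and vanishing of the child terms there
  have keyB : ∀ u : V, μ u {0} = ENNReal.ofReal (ε u) ∧
      ∀ v : t.chi u, ENNReal.ofReal (‖lam (v : V)‖ ^ 2) * recipInt (μ (v : V)) {0} = 0 := by
    intro u
    have h := hcons u {0} (measurableSet_singleton 0)
    have hle1 : μ u {0} ≤ 1 := prob_le_one
    have hterm : ∀ v : t.chi u,
        ENNReal.ofReal (‖lam (v : V)‖ ^ 2) * recipInt (μ (v : V)) {0} = 0 := by
      intro v
      by_contra hc
      have h1 : ENNReal.ofReal (‖lam (v : V)‖ ^ 2) ≠ 0 := fun hz => hc (by rw [hz, zero_mul])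
      have h2 : recipInt (μ (v : V)) {0} ≠ 0 := fun hz => hc (by rw [hz, mul_zero])
      have h3 : μ (v : V) {0} ≠ 0 := by
        intro hz; apply h2; rw [hsing, hz, mul_zero]
      have h4 : ENNReal.ofReal (‖lam (v : V)‖ ^ 2) * recipInt (μ (v : V)) {0} = ⊤ := by
        rw [hsing, ENNReal.top_mul h3, ENNReal.mul_top h1]
      have h5 : (⊤ : ℝ≥0∞) ≤ μ u {0} := by
        rw [h]
        calc (⊤ : ℝ≥0∞) = ENNReal.ofReal (‖lam (v : V)‖ ^ 2) * recipInt (μ (v : V)) {0} :=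
              h4.symm
        _ ≤ ∑' w : t.chi u, ENNReal.ofReal (‖lam (w : V)‖ ^ 2) * recipInt (μ (w : V)) {0} :=
              ENNReal.le_tsum v
        _ ≤ _ := le_self_add
      exact (by simp : ¬ ((⊤ : ℝ≥0∞) ≤ 1)) (h5.trans hle1)
    refine ⟨?_, hterm⟩
    rw [h, ENNReal.tsum_eq_zero.2 hterm, zero_add]
    simp
  -- (iii)
  have part3 : ∀ v : V, t.hasPar v → lam v ≠ 0 → μ v {0} = 0 := by
    intro v hv hlam
    obtain ⟨u, huv⟩ := hv
    have h := (keyB u).2 ⟨v, huv⟩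
    have ha : ENNReal.ofReal (‖lam v‖ ^ 2) ≠ 0 := by
      simp only [ne_eq, ENNReal.ofReal_eq_zero, not_le]
      exact pow_pos (norm_pos_iff.mpr hlam) 2
    have h2 : recipInt (μ v) {0} = 0 := by
      rcases mul_eq_zero.1 h with h' | h'
      · exact absurd h' ha
      · exact h'
    rw [hsing] at h2
    rcases mul_eq_zero.1 h2 with h' | h'
    · exact absurd h' (by simp)
    · exact h'
  -- the measure identity coming from consistency
  have hmeas : ∀ v : V, μ v = Measure.sum (fun w : t.chi v =>
      ENNReal.ofReal (‖lam (w : V)‖ ^ 2) •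
        (μ (w : V)).withDensity fun s => (ENNReal.ofReal s)⁻¹) +
      ENNReal.ofReal (ε v) • Measure.dirac (0 : ℝ) := by
    intro v
    ext σ hσ
    rw [hcons v σ hσ, Measure.add_apply, Measure.sum_apply _ hσ, Measure.smul_apply,
      smul_eq_mul]
    congr 1
    refine tsum_congr fun w => ?_
    rw [Measure.smul_apply, smul_eq_mul, withDensity_apply _ hσ]
    rfl
  -- parent of a child
  have hpar : ∀ a b : V, t.E a b → t.par b = a := by
    intro a b h
    have hb : t.hasPar b := ⟨a, h⟩
    rw [Paper.DirectedTree.par, dif_pos hb]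
    exact t.par_unique hb.choose_spec h
  -- weight product recursion
  have hwsucc : ∀ (m : ℕ) (a b : V), t.E a b →
      t.wprod lam (m + 1) b = t.wprod lam m a * lam b := by
    intro m a b h
    rw [Paper.DirectedTree.wprod, Finset.prod_range_succ']
    have h1 : ∀ j, lam (t.par^[j + 1] b) = lam (t.par^[j] a) := fun j => by
      rw [Function.iterate_succ_apply, hpar a b h]
    have h0 : lam (t.par^[0] b) = lam b := by simp
    rw [Finset.prod_congr rfl (fun j _ => h1 j), h0]
    rfl
  -- inverse power identity
  have hinv : ∀ (x : ℝ≥0∞) (m : ℕ), x ≠ ⊤ → x⁻¹ * (x ^ m)⁻¹ = (x ^ (m + 1))⁻¹ := by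
    intro x m hx
    rw [pow_succ, ENNReal.mul_inv (Or.inr hx) (Or.inl (ENNReal.pow_ne_top hx)), mul_comm]
  -- the main induction
  have main : ∀ (n : ℕ) (u : V) (σ : Set ℝ), MeasurableSet σ →
      μ u σ = (∑' v : t.chin (n + 1) u, ENNReal.ofReal (‖t.wprod lam (n + 1) (v : V)‖ ^ 2) *
          ∫⁻ s in σ, (ENNReal.ofReal s ^ (n + 1))⁻¹ ∂(μ (v : V)))
        + ENNReal.ofReal (ε u) * Measure.dirac (0 : ℝ) σ := by
    intro n
    induction n with
    | zero =>
      intro u σ hσ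
      have hset : t.chin 1 u = t.chi u := by
        ext w
        simp [Paper.DirectedTree.chin, Paper.DirectedTree.chiIter, Paper.DirectedTree.chiSet,
          Paper.DirectedTree.chi]
      rw [hcons u σ hσ]
      congr 1
      rw [show (0 : ℕ) + 1 = 1 from rfl, hset]
      refine tsum_congr fun v => ?_
      simp [Paper.DirectedTree.wprod, recipInt]
    | succ n ih =>
      intro u σ hσ
      rw [ih u σ hσ]
      congr 1
      -- per-vertex expansion
      have claim : ∀ v : (t.chin (n + 1) u : Set V),
          ENNReal.ofReal (‖t.wprod lam (n + 1) (v : V)‖ ^ 2) *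
              (∫⁻ s in σ, (ENNReal.ofReal s ^ (n + 1))⁻¹ ∂(μ (v : V)))
            = ∑' w : t.chi (v : V),
                ENNReal.ofReal (‖t.wprod lam (n + 1 + 1) (w : V)‖ ^ 2) *
                  ∫⁻ s in σ, (ENNReal.ofReal s ^ (n + 1 + 1))⁻¹ ∂(μ (w : V)) := by
        intro v
        by_cases h0 : t.wprod lam (n + 1) (v : V) = 0
        · rw [h0]
          simp only [norm_zero, ne_eq, OfNat.ofNat_ne_zero, not_false_eq_true, zero_pow,
            ENNReal.ofReal_zero, zero_mul]
          symm
          refine ENNReal.tsum_eq_zero.2 fun w => ?_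
          rw [hwsucc (n + 1) (v : V) (w : V) w.2, h0, zero_mul]
          simp
        · have hlamv : lam (v : V) ≠ 0 := by
            intro hz
            apply h0
            rw [Paper.DirectedTree.wprod]
            exact Finset.prod_eq_zero (Finset.mem_range.2 n.succ_pos) (by simpa using hz)
          have hv2 := v.2
          simp only [Paper.DirectedTree.chin, Paper.DirectedTree.chiIter,
            Paper.DirectedTree.chiSet, Set.mem_setOf_eq] at hv2
          obtain ⟨p, hp, hpe⟩ := hv2
          have hεv : ENNReal.ofReal (ε (v : V)) = 0 := by
            rw [← (keyB (v : V)).1]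
            exact part3 (v : V) ⟨p, hpe⟩ hlamv
          have hgm : Measurable fun s : ℝ => (ENNReal.ofReal s ^ (n + 1))⁻¹ :=
            (ENNReal.measurable_ofReal.pow_const (n + 1)).inv
          have hfm : Measurable fun s : ℝ => (ENNReal.ofReal s)⁻¹ :=
            ENNReal.measurable_ofReal.inv
          conv_lhs => rw [hmeas (v : V)]
          rw [Measure.restrict_add, lintegral_add_measure, Measure.restrict_smul,
            lintegral_smul_measure, hεv, zero_smul, add_zero,
            Measure.restrict_sum _ hσ, lintegral_sum_measure]
          rw [tsum_congr (fun w : (t.chi (v : V) : Set V) => by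
            rw [Measure.restrict_smul, lintegral_smul_measure, smul_eq_mul, restrict_withDensity hσ,
              lintegral_withDensity_eq_lintegral_mul _ hfm hgm])]
          rw [← ENNReal.tsum_mul_left]
          refine tsum_congr fun w => ?_
          rw [← mul_assoc]
          congr 1
          · rw [hwsucc (n + 1) (v : V) (w : V) w.2, norm_mul, mul_pow,
              ENNReal.ofReal_mul (by positivity)]
          · refine lintegral_congr fun s => ?_
            simp only [Pi.mul_apply]
            exact hinv (ENNReal.ofReal s) (n + 1) ENNReal.ofReal_ne_top
      rw [tsum_congr claim]
      -- reindex the double sum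
      have emem : ∀ (p : Σ v : (t.chin (n + 1) u : Set V), (t.chi (v : V) : Set V)),
          (p.2 : V) ∈ t.chin (n + 1 + 1) u := by
        rintro ⟨v, w⟩
        exact ⟨(v : V), v.2, w.2⟩
      let e : (Σ v : (t.chin (n + 1) u : Set V), (t.chi (v : V) : Set V)) →
          (t.chin (n + 1 + 1) u : Set V) := fun p => ⟨(p.2 : V), emem p⟩
      have hbij : Function.Bijective e := by
        constructor
        · rintro ⟨⟨v1, hv1⟩, ⟨w1, hw1⟩⟩ ⟨⟨v2, hv2⟩, ⟨w2, hw2⟩⟩ h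
          have hw : w1 = w2 := congrArg Subtype.val h
          subst hw
          have hv : v1 = v2 := t.par_unique hw1 hw2
          subst hv
          rfl
        · rintro ⟨w, hw⟩
          obtain ⟨v, hv, hvw⟩ := hw
          exact ⟨⟨⟨v, hv⟩, ⟨w, hvw⟩⟩, rfl⟩
      calc ∑' v : (t.chin (n + 1) u : Set V), ∑' w : (t.chi (v : V) : Set V),
              ENNReal.ofReal (‖t.wprod lam (n + 1 + 1) (w : V)‖ ^ 2) *
                ∫⁻ s in σ, (ENNReal.ofReal s ^ (n + 1 + 1))⁻¹ ∂(μ (w : V))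
          = ∑' p : Σ v : (t.chin (n + 1) u : Set V), (t.chi (v : V) : Set V),
              ENNReal.ofReal (‖t.wprod lam (n + 1 + 1) ((p.2 : V))‖ ^ 2) *
                ∫⁻ s in σ, (ENNReal.ofReal s ^ (n + 1 + 1))⁻¹ ∂(μ ((p.2 : V))) :=
            (ENNReal.tsum_sigma' (fun p : Σ v : (t.chin (n + 1) u : Set V),
              (t.chi (v : V) : Set V) =>
              ENNReal.ofReal (‖t.wprod lam (n + 1 + 1) ((p.2 : V))‖ ^ 2) *
                ∫⁻ s in σ, (ENNReal.ofReal s ^ (n + 1 + 1))⁻¹ ∂(μ ((p.2 : V))))).symm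
        _ = ∑' w : (t.chin (n + 1 + 1) u : Set V),
              ENNReal.ofReal (‖t.wprod lam (n + 1 + 1) (w : V)‖ ^ 2) *
                ∫⁻ s in σ, (ENNReal.ofReal s ^ (n + 1 + 1))⁻¹ ∂(μ (w : V)) := by
            exact Equiv.tsum_eq (Equiv.ofBijective e hbij)
              (fun w : (t.chin (n + 1 + 1) u : Set V) =>
                ENNReal.ofReal (‖t.wprod lam (n + 1 + 1) (w : V)‖ ^ 2) *
                  ∫⁻ s in σ, (ENNReal.ofReal s ^ (n + 1 + 1))⁻¹ ∂(μ (w : V)))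
  refine ⟨?_, ?_, part3, ?_⟩
  · intro u
    refine ⟨hS_le u, ?_⟩
    have h := keyA u
    have hne : (∑' v : t.chi u,
        ENNReal.ofReal (‖lam (v : V)‖ ^ 2) * recipInt (μ (v : V)) Set.univ) ≠ ⊤ :=
      ne_top_of_le_ne_top ENNReal.one_ne_top (hS_le u)
    rw [← h]
    exact (ENNReal.add_sub_cancel_left hne).symm
  · intro u
    rw [(keyB u).1]
    constructor
    · intro h
      exact le_antisymm (ENNReal.ofReal_eq_zero.1 h) (hε u)
    · intro h
      rw [h]; simp
  · intro u n hn σ hσ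
    match n, hn with
    | (m + 1), _ => exact main m u σ hσ
end
end

section
/- Let T be a directed tree, let λ = {λ_v}_{v∈V°} be complex numbers, {ε_u}_{u∈V} nonnegative reals and {μ_u}_{u∈V} Borel probability measures on ℝ₊ satisfying the consistency equation at every u ∈ V, and let S_λ be the weighted shift on T with weights λ. Then: (i) ∫_0^∞ sⁿ dμ_u(s) = Σ_{v∈Chi^⟨n⟩(u)} |λ_{u|v}|² for all u ∈ V and integers n ≥ 1; (ii) if Chi^⟨n⟩(u) = ∅ for some u ∈ V and n ≥ 1, then μ_v = δ₀ for all v ∈ Des(u); (iii) E ⊆ D∞(S_λ) if and only if ∫_0^∞ sⁿ dμ_u(s) < ∞ for all n ∈ ℕ and u ∈ V; (iv) if E ⊆ D∞(S_λ), then ‖S_λⁿ e_u‖² = ∫_0^∞ sⁿ dμ_u(s) for all u ∈ V and n ∈ ℕ; (v) S_λ is a bounded operator with domain all of ℓ²(V) if and only if there exists M ≥ 0 such that supp μ_u ⊆ [0, M] for every u ∈ V. -/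
open Filter
open scoped ENNReal InnerProductSpace ComplexConjugate

attribute [local instance] Classical.propDecidable

noncomputable section

open Paper MeasureTheory Filter
open scoped ENNReal

namespace StmtAux

open Paper Paper.DirectedTree MeasureTheory
open scoped NNReal

variable {V : Type*} (t : DirectedTree V)

lemma par_eq {u v : V} (h : t.E u v) : t.par v = u := by
  have hp : t.hasPar v := ⟨u, h⟩
  rw [DirectedTree.par, dif_pos hp]
  exact t.par_unique hp.choose_spec h

lemma E_par {v : V} (h : t.hasPar v) : t.E (t.par v) v := by
  rw [DirectedTree.par, dif_pos h]; exact h.choose_spec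

lemma chiSet_singleton (u : V) : t.chiSet {u} = t.chi u := by
  ext v; simp [DirectedTree.chiSet, DirectedTree.chi]

lemma chiIter_succ (n : ℕ) (W : Set V) :
    t.chiIter (n + 1) W = t.chiSet (t.chiIter n W) := rfl

lemma chiIter_mono {W₁ W₂ : Set V} (h : W₁ ⊆ W₂) : ∀ n, t.chiIter n W₁ ⊆ t.chiIter n W₂ := by
  intro n
  induction n with
  | zero => exact h
  | succ n ih =>
      intro v hv
      obtain ⟨w, hw, hE⟩ : ∃ w ∈ t.chiIter n W₁, t.E w v := hv
      exact ⟨w, ih hw, hE⟩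

lemma chiIter_empty : ∀ n, t.chiIter n (∅ : Set V) = ∅ := by
  intro n
  induction n with
  | zero => rfl
  | succ n ih =>
      rw [chiIter_succ, ih]
      ext v; simp [DirectedTree.chiSet]

lemma chiIter_add (a b : ℕ) (W : Set V) :
    t.chiIter (a + b) W = t.chiIter a (t.chiIter b W) := by
  induction a with
  | zero => simp [DirectedTree.chiIter]
  | succ a ih =>
      have h : a + 1 + b = (a + b) + 1 := by omega
      rw [h, chiIter_succ, ih, chiIter_succ]

lemma chin_zero (u : V) : t.chin 0 u = {u} := rfl

lemma chin_one (u : V) : t.chin 1 u = t.chi u := chiSet_singleton t u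

lemma mem_chin_succ {n : ℕ} {u w : V} :
    w ∈ t.chin (n + 1) u ↔ ∃ v, v ∈ t.chi u ∧ w ∈ t.chin n v := by
  induction n generalizing w with
  | zero =>
      rw [chin_one]
      constructor
      · intro hw; exact ⟨w, hw, rfl⟩
      · rintro ⟨v, hv, hw⟩
        have : w = v := hw
        rwa [this]
  | succ n ih =>
      constructor
      · intro hw
        obtain ⟨x, hx, hE⟩ : ∃ x ∈ t.chin (n + 1) u, t.E x w := hw
        obtain ⟨v, hv, hxv⟩ := ih.mp hx
        exact ⟨v, hv, ⟨x, hxv, hE⟩⟩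
      · rintro ⟨v, hv, hw⟩
        obtain ⟨x, hx, hE⟩ : ∃ x ∈ t.chin n v, t.E x w := hw
        exact ⟨x, ih.mpr ⟨v, hv, hx⟩, hE⟩

lemma chin_disjoint : ∀ {n : ℕ} {v₁ v₂ w : V},
    w ∈ t.chin n v₁ → w ∈ t.chin n v₂ → v₁ = v₂ := by
  intro n
  induction n with
  | zero =>
      intro v₁ v₂ w h₁ h₂
      have e₁ : w = v₁ := h₁
      have e₂ : w = v₂ := h₂
      rw [← e₁, e₂]
  | succ n ih =>
      intro v₁ v₂ w h₁ h₂
      obtain ⟨x₁, hx₁, hE₁⟩ : ∃ x ∈ t.chin n v₁, t.E x w := h₁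
      obtain ⟨x₂, hx₂, hE₂⟩ : ∃ x ∈ t.chin n v₂, t.E x w := h₂
      cases t.par_unique hE₁ hE₂
      exact ih hx₁ hx₂

lemma parIter_of_chin : ∀ {n : ℕ} {u w : V}, w ∈ t.chin n u → t.par^[n] w = u := by
  intro n
  induction n with
  | zero => intro u w h; exact h
  | succ n ih =>
      intro u w h
      obtain ⟨x, hx, hE⟩ : ∃ x ∈ t.chin n u, t.E x w := h
      rw [Function.iterate_succ_apply, par_eq t hE]
      exact ih hx

lemma wprod_succ (lam : V → ℂ) {n : ℕ} {u w : V} (h : w ∈ t.chin n u) :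
    t.wprod lam (n + 1) w = t.wprod lam n w * lam u := by
  rw [DirectedTree.wprod, Finset.prod_range_succ, parIter_of_chin t h]
  rfl

lemma wprod_succ' (lam : V → ℂ) (n : ℕ) (v : V) :
    t.wprod lam (n + 1) v = lam v * t.wprod lam n (t.par v) := by
  simp only [DirectedTree.wprod, Finset.prod_range_succ']
  rw [mul_comm]
  congr 1

/-- the moment summand -/
noncomputable def gfun (lam : V → ℂ) (n : ℕ) (w : V) : ℝ≥0∞ :=
  ENNReal.ofReal (‖t.wprod lam n w‖ ^ 2)

/-- the total weight of `chin n u` -/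
noncomputable def G (lam : V → ℂ) (n : ℕ) (u : V) : ℝ≥0∞ :=
  ∑' w : V, Set.indicator (t.chin n u) (gfun t lam n) w

lemma G_eq_tsum_subtype (lam : V → ℂ) (n : ℕ) (u : V) :
    G t lam n u = ∑' v : t.chin n u, ENNReal.ofReal (‖t.wprod lam n (v : V)‖ ^ 2) :=
  (tsum_subtype (t.chin n u) (gfun t lam n)).symm

lemma G_zero (lam : V → ℂ) (u : V) : G t lam 0 u = 1 := by
  rw [G, tsum_eq_single u]
  · rw [Set.indicator_of_mem (by exact rfl : u ∈ t.chin 0 u)]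
    simp [gfun, DirectedTree.wprod]
  · intro w hw
    apply Set.indicator_of_notMem
    rw [chin_zero]
    simp [hw]

lemma G_succ (lam : V → ℂ) (n : ℕ) (u : V) :
    G t lam (n + 1) u = ∑' v : V, Set.indicator (t.chi u)
      (fun v => ENNReal.ofReal (‖lam v‖ ^ 2) * G t lam n v) v := by
  classical
  set A : V → V → ℝ≥0∞ := fun v w =>
    if v ∈ t.chi u then ENNReal.ofReal (‖lam v‖ ^ 2) *
      Set.indicator (t.chin n v) (gfun t lam n) w else 0 with hA
  have h1 : ∀ v : V, Set.indicator (t.chi u)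
      (fun v => ENNReal.ofReal (‖lam v‖ ^ 2) * G t lam n v) v = ∑' w : V, A v w := by
    intro v
    by_cases hv : v ∈ t.chi u
    · rw [Set.indicator_of_mem hv, G, ← ENNReal.tsum_mul_left]
      apply tsum_congr; intro w
      rw [hA]; simp only [if_pos hv]
    · rw [Set.indicator_of_notMem hv]
      symm
      apply ENNReal.tsum_eq_zero.mpr
      intro w; rw [hA]; simp only [if_neg hv]
  have h2 : ∀ w : V, ∑' v : V, A v w
      = Set.indicator (t.chin (n + 1) u) (gfun t lam (n + 1)) w := by
    intro w
    by_cases hw : w ∈ t.chin (n + 1) u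
    · obtain ⟨v₀, hv₀, hwv₀⟩ := (mem_chin_succ t).mp hw
      rw [Set.indicator_of_mem hw, tsum_eq_single v₀]
      · rw [hA]
        simp only [if_pos hv₀, Set.indicator_of_mem hwv₀]
        rw [gfun, gfun, wprod_succ t lam hwv₀, norm_mul, mul_pow,
          ENNReal.ofReal_mul (by positivity), mul_comm]
      · intro v hv
        rw [hA]
        by_cases hvc : v ∈ t.chi u
        · simp only [if_pos hvc]
          rw [Set.indicator_of_notMem, mul_zero]
          intro hcon
          exact hv (chin_disjoint t hcon hwv₀)
        · simp only [if_neg hvc]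
    · rw [Set.indicator_of_notMem hw]
      apply ENNReal.tsum_eq_zero.mpr
      intro v
      rw [hA]
      by_cases hvc : v ∈ t.chi u
      · simp only [if_pos hvc]
        rw [Set.indicator_of_notMem, mul_zero]
        intro hcon
        exact hw ((mem_chin_succ t).mpr ⟨v, hvc, hcon⟩)
      · simp only [if_neg hvc]
  calc G t lam (n + 1) u = ∑' w : V, ∑' v : V, A v w := by
        rw [G]; exact tsum_congr fun w => (h2 w).symm
    _ = ∑' v : V, ∑' w : V, A v w := ENNReal.tsum_comm
    _ = _ := tsum_congr fun v => (h1 v).symm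

section Measures

variable (lam : V → ℂ) (μ : V → MeasureTheory.Measure ℝ) (ε : V → ℝ)

lemma minv_meas : Measurable fun s : ℝ => (ENNReal.ofReal s)⁻¹ :=
  ENNReal.measurable_ofReal.inv

lemma lintegral_cons {u : V} (hc : Consistent t lam μ ε u) {g : ℝ → ℝ≥0∞}
    (hg : Measurable g) :
    ∫⁻ s, g s ∂(μ u) = (∑' v : t.chi u, ENNReal.ofReal (‖lam (v : V)‖ ^ 2) *
        ∫⁻ s, g s * (ENNReal.ofReal s)⁻¹ ∂(μ (v : V)))
      + ENNReal.ofReal (ε u) * g 0 := by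
  have hμ : μ u = Measure.sum (fun v : t.chi u => ENNReal.ofReal (‖lam (v : V)‖ ^ 2) •
      (μ (v : V)).withDensity (fun s => (ENNReal.ofReal s)⁻¹))
      + ENNReal.ofReal (ε u) • Measure.dirac (0 : ℝ) := by
    ext σ hσ
    rw [Measure.add_apply, Measure.sum_apply _ hσ, Measure.smul_apply, smul_eq_mul,
      hc σ hσ]
    congr 1
    apply tsum_congr; intro v
    rw [Measure.smul_apply, smul_eq_mul, withDensity_apply _ hσ]
    rfl
  rw [hμ, lintegral_add_measure, lintegral_sum_measure, lintegral_smul_measure,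
    lintegral_dirac' _ hg]
  congr 1
  apply tsum_congr; intro v
  rw [lintegral_smul_measure, lintegral_withDensity_eq_lintegral_mul _ minv_meas hg]
  congr 1
  apply lintegral_congr; intro s
  exact mul_comm _ _

lemma term_aux (hprob : ∀ u : V, IsProbabilityMeasure (μ u))
    (hpos : ∀ u : V, μ u (Set.Iio 0) = 0) {u v : V} (hc : Consistent t lam μ ε u)
    (hv : v ∈ t.chi u) :
    ENNReal.ofReal (‖lam v‖ ^ 2) * (μ v) (Set.Ioi 0) = ENNReal.ofReal (‖lam v‖ ^ 2) := by
  haveI := hprob u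
  haveI := hprob v
  by_cases h0 : μ v {0} = 0
  · have hIci : μ v (Set.Ici (0:ℝ)) = 1 := by
      refine le_antisymm prob_le_one ?_
      have h1 : (1:ℝ≥0∞) = μ v (Set.Iio 0 ∪ Set.Ici 0) := by
        rw [Set.Iio_union_Ici, measure_univ]
      rw [h1]
      calc μ v (Set.Iio 0 ∪ Set.Ici 0) ≤ μ v (Set.Iio 0) + μ v (Set.Ici 0) :=
            measure_union_le _ _
        _ = μ v (Set.Ici 0) := by rw [hpos v, zero_add]
    have hIoi : μ v (Set.Ioi (0:ℝ)) = 1 := by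
      have : μ v (Set.Ici (0:ℝ)) = μ v {0} + μ v (Set.Ioi 0) := by
        rw [← measure_union (by simp [Set.disjoint_left]) measurableSet_Ioi]
        congr 1
        ext x; simp [le_iff_lt_or_eq, eq_comm, or_comm]
      rw [this, h0, zero_add] at hIci
      exact hIci
    rw [hIoi, mul_one]
  · have hrec : recipInt (μ v) {0} = ⊤ := by
      rw [recipInt, lintegral_singleton (fun s => (ENNReal.ofReal s)⁻¹) 0]
      simp [ENNReal.top_mul h0]
    have hle : ENNReal.ofReal (‖lam v‖ ^ 2) * recipInt (μ v) {0} ≤ 1 := by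
      calc ENNReal.ofReal (‖lam v‖ ^ 2) * recipInt (μ v) {0}
          ≤ ∑' w : t.chi u, ENNReal.ofReal (‖lam (w : V)‖ ^ 2) * recipInt (μ (w : V)) {0} :=
            ENNReal.le_tsum (⟨v, hv⟩ : t.chi u)
        _ ≤ _ + ENNReal.ofReal (ε u) * Measure.dirac (0:ℝ) {0} := le_self_add
        _ = μ u {0} := (hc {0} (measurableSet_singleton 0)).symm
        _ ≤ 1 := prob_le_one
    have hzero : ENNReal.ofReal (‖lam v‖ ^ 2) = 0 := by
      by_contra hne
      rw [hrec, ENNReal.mul_top hne] at hle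
      exact (by simp : ¬ (⊤:ℝ≥0∞) ≤ 1) hle
    rw [hzero, zero_mul]

lemma moment_zero (hprob : ∀ u : V, IsProbabilityMeasure (μ u)) (u : V) :
    ∫⁻ s, ENNReal.ofReal s ^ 0 ∂(μ u) = 1 := by
  haveI := hprob u
  simp

lemma moment_rec (hprob : ∀ u : V, IsProbabilityMeasure (μ u))
    (hpos : ∀ u : V, μ u (Set.Iio 0) = 0) (hcons : ∀ u : V, Consistent t lam μ ε u)
    (u : V) (n : ℕ) :
    ∫⁻ s, ENNReal.ofReal s ^ (n + 1) ∂(μ u)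
      = ∑' v : t.chi u, ENNReal.ofReal (‖lam (v : V)‖ ^ 2) *
          ∫⁻ s, ENNReal.ofReal s ^ n ∂(μ (v : V)) := by
  have hg : Measurable fun s : ℝ => ENNReal.ofReal s ^ (n + 1) :=
    ENNReal.measurable_ofReal.pow_const _
  rw [lintegral_cons t lam μ ε (hcons u) hg]
  rw [show (ENNReal.ofReal (0:ℝ)) ^ (n + 1) = 0 by simp, mul_zero, add_zero]
  apply tsum_congr; intro v
  rcases Nat.eq_zero_or_pos n with hn | hn
  · subst hn
    have hind : ∀ s : ℝ, ENNReal.ofReal s ^ 1 * (ENNReal.ofReal s)⁻¹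
        = Set.indicator (Set.Ioi (0:ℝ)) (fun _ => 1) s := by
      intro s
      rcases le_or_gt s 0 with hs | hs
      · rw [ENNReal.ofReal_eq_zero.mpr hs]
        simp [Set.indicator_of_notMem, Set.mem_Ioi, not_lt.mpr hs]
      · rw [pow_one, ENNReal.mul_inv_cancel (by simp [hs]) ENNReal.ofReal_ne_top,
          Set.indicator_of_mem (Set.mem_Ioi.mpr hs)]
    rw [lintegral_congr hind, lintegral_indicator measurableSet_Ioi,
      setLIntegral_const, one_mul, term_aux t lam μ ε hprob hpos (hcons u) v.2,
      moment_zero μ hprob, mul_one]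
  · congr 1
    apply lintegral_congr; intro s
    rcases le_or_gt s 0 with hs | hs
    · rw [ENNReal.ofReal_eq_zero.mpr hs]
      simp [zero_pow, hn.ne']
    · rw [pow_succ, mul_assoc, ENNReal.mul_inv_cancel (by simp [hs]) ENNReal.ofReal_ne_top,
        mul_one]

lemma moment_eq (hprob : ∀ u : V, IsProbabilityMeasure (μ u))
    (hpos : ∀ u : V, μ u (Set.Iio 0) = 0) (hcons : ∀ u : V, Consistent t lam μ ε u) :
    ∀ (n : ℕ) (u : V), ∫⁻ s, ENNReal.ofReal s ^ n ∂(μ u) = G t lam n u := by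
  intro n
  induction n with
  | zero => intro u; rw [moment_zero μ hprob, G_zero]
  | succ n ih =>
      intro u
      rw [moment_rec t lam μ ε hprob hpos hcons u n, G_succ,
        ← tsum_subtype (t.chi u) (fun v => ENNReal.ofReal (‖lam v‖ ^ 2) * G t lam n v)]
      apply tsum_congr; intro v
      rw [ih]

lemma dirac_univ_aux (hprob : ∀ u : V, IsProbabilityMeasure (μ u)) {u : V}
    (h : ∀ σ : Set ℝ, MeasurableSet σ →
      μ u σ = ENNReal.ofReal (ε u) * Measure.dirac (0:ℝ) σ) :
    μ u = Measure.dirac (0:ℝ) := by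
  haveI := hprob u
  have h1 : ENNReal.ofReal (ε u) = 1 := by
    have h2 := h Set.univ MeasurableSet.univ
    rw [measure_univ, measure_univ, mul_one] at h2
    exact h2.symm
  ext σ hσ
  rw [h σ hσ, h1, one_mul]

lemma recipInt_dirac (σ : Set ℝ) (hσ : MeasurableSet σ) :
    recipInt (Measure.dirac (0:ℝ)) σ = if (0:ℝ) ∈ σ then ⊤ else 0 := by
  rw [recipInt, setLIntegral_dirac' minv_meas hσ]
  simp

lemma mu_dirac_of_empty_chin (hprob : ∀ u : V, IsProbabilityMeasure (μ u))
    (hpos : ∀ u : V, μ u (Set.Iio 0) = 0) (hcons : ∀ u : V, Consistent t lam μ ε u) :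
    ∀ n : ℕ, 1 ≤ n → ∀ u : V, t.chin n u = ∅ → μ u = Measure.dirac (0:ℝ) := by
  intro n
  induction n with
  | zero => omega
  | succ n ih =>
      intro _ u hu
      have hkey : ∀ v : V, v ∈ t.chi u → ENNReal.ofReal (‖lam v‖ ^ 2) = 0 := by
        rcases Nat.eq_zero_or_pos n with rfl | hn
        · intro v hv
          rw [← chin_one t u, hu] at hv
          exact absurd hv (Set.notMem_empty v)
        · intro v hv
          have hvempty : t.chin n v = ∅ := by
            rw [Set.eq_empty_iff_forall_notMem]
            intro w hw
            have : w ∈ t.chin (n + 1) u := (mem_chin_succ t).mpr ⟨v, hv, hw⟩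
            rw [hu] at this
            exact Set.notMem_empty w this
          have hdir : μ v = Measure.dirac (0:ℝ) := ih hn v hvempty
          haveI := hprob u
          have hle : ENNReal.ofReal (‖lam v‖ ^ 2) * recipInt (μ v) Set.univ ≤ 1 := by
            calc ENNReal.ofReal (‖lam v‖ ^ 2) * recipInt (μ v) Set.univ
                ≤ ∑' w : t.chi u, ENNReal.ofReal (‖lam (w : V)‖ ^ 2) *
                    recipInt (μ (w : V)) Set.univ := ENNReal.le_tsum (⟨v, hv⟩ : t.chi u)
              _ ≤ _ + ENNReal.ofReal (ε u) * Measure.dirac (0:ℝ) Set.univ := le_self_add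
              _ = μ u Set.univ := (hcons u Set.univ MeasurableSet.univ).symm
              _ ≤ 1 := prob_le_one
          rw [hdir, recipInt_dirac, if_pos (Set.mem_univ (0:ℝ))] at hle
          · by_contra hne
            rw [ENNReal.mul_top hne] at hle
            exact (by simp : ¬ (⊤:ℝ≥0∞) ≤ 1) hle
          · exact MeasurableSet.univ
      apply dirac_univ_aux μ ε hprob
      intro σ hσ
      rw [hcons u σ hσ]
      have hz : ∑' v : t.chi u, ENNReal.ofReal (‖lam (v : V)‖ ^ 2) *
          recipInt (μ (v : V)) σ = 0 :=
        ENNReal.tsum_eq_zero.mpr fun v => by rw [hkey (v : V) v.2, zero_mul]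
      rw [hz, zero_add]

lemma chin_des_empty {n k : ℕ} {u v : V} (hu : t.chin n u = ∅) (hv : v ∈ t.chin k u) :
    t.chin n v = ∅ := by
  rw [Set.eq_empty_iff_forall_notMem]
  intro w hw
  have h1 : w ∈ t.chiIter n (t.chin k u) :=
    chiIter_mono t (Set.singleton_subset_iff.mpr hv) n hw
  have h2 : t.chiIter n (t.chin k u) = t.chiIter (n + k) {u} :=
    (chiIter_add t n k {u}).symm
  have h3 : t.chiIter (n + k) {u} = ∅ := by
    rw [Nat.add_comm, chiIter_add t k n {u}]
    rw [show t.chiIter n {u} = ∅ from hu, chiIter_empty]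
  rw [h2, h3] at h1
  exact Set.notMem_empty w h1

lemma ofReal_rpow_norm (x : ℂ) : ENNReal.ofReal (‖x‖ ^ (2:ℝ)) = ((‖x‖₊ : ℝ≥0∞)) ^ 2 := by
  rw [show ((2:ℝ)) = ((2:ℕ):ℝ) by norm_num, Real.rpow_natCast,
    ENNReal.ofReal_pow (norm_nonneg x), ofReal_norm, enorm_eq_nnnorm]

lemma ofReal_norm_sq (x : ℂ) : ENNReal.ofReal (‖x‖ ^ 2) = ((‖x‖₊ : ℝ≥0∞)) ^ 2 := by
  rw [ENNReal.ofReal_pow (norm_nonneg x), ofReal_norm, enorm_eq_nnnorm]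

lemma memℓp_two_iff (f : V → ℂ) :
    Memℓp f 2 ↔ (∑' w : V, ((‖f w‖₊ : ℝ≥0∞)) ^ 2) ≠ ⊤ := by
  have h1 : Memℓp f 2 ↔ Summable (fun w => (‖f w‖₊ ^ 2 : ℝ≥0)) := by
    rw [memℓp_gen_iff (by norm_num : 0 < (2:ℝ≥0∞).toReal), ← NNReal.summable_coe]
    apply summable_congr
    intro w
    rw [show (2:ℝ≥0∞).toReal = ((2:ℕ):ℝ) by norm_num, Real.rpow_natCast]
    norm_cast
  rw [h1, ← ENNReal.tsum_coe_ne_top_iff_summable,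
    tsum_congr (fun w : V => ENNReal.coe_pow (‖f w‖₊) (n := 2))]

lemma norm_sq_eq (f : H2 V) :
    ENNReal.ofReal (‖f‖ ^ 2) = ∑' w : V, ((‖f w‖₊ : ℝ≥0∞)) ^ 2 := by
  have h2 : (2:ℝ≥0∞).toReal = 2 := by norm_num
  have hs := lp.norm_rpow_eq_tsum (p := 2) (by norm_num) f
  rw [h2] at hs
  have hsum : Summable (fun w => ‖f w‖ ^ (2:ℝ)) := by
    have hm := lp.memℓp f
    rw [memℓp_gen_iff (by norm_num : 0 < (2:ℝ≥0∞).toReal)] at hm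
    rw [h2] at hm
    exact hm
  calc ENNReal.ofReal (‖f‖ ^ 2)
      = ENNReal.ofReal (∑' w, ‖f w‖ ^ (2:ℝ)) := by
        rw [← hs, show ((2:ℝ)) = ((2:ℕ):ℝ) by norm_num, Real.rpow_natCast]
    _ = ∑' w, ENNReal.ofReal (‖f w‖ ^ (2:ℝ)) :=
        ENNReal.ofReal_tsum_of_nonneg (fun w => Real.rpow_nonneg (norm_nonneg _) _) hsum
    _ = _ := tsum_congr fun w => ofReal_rpow_norm _

/-- the `n`-step image of `e_u` under the formal shift -/
noncomputable def chainF (lam : V → ℂ) (n : ℕ) (u : V) : V → ℂ := fun w =>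
  if w ∈ t.chin n u then t.wprod lam n w else 0

lemma chainF_nnnorm (lam : V → ℂ) (n : ℕ) (u w : V) :
    ((‖chainF t lam n u w‖₊ : ℝ≥0∞)) ^ 2
      = Set.indicator (t.chin n u) (gfun t lam n) w := by
  by_cases h : w ∈ t.chin n u
  · rw [chainF, if_pos h, Set.indicator_of_mem h, gfun, ofReal_norm_sq]
  · rw [chainF, if_neg h, Set.indicator_of_notMem h]
    simp

lemma chainF_tsum (lam : V → ℂ) (n : ℕ) (u : V) :
    (∑' w : V, ((‖chainF t lam n u w‖₊ : ℝ≥0∞)) ^ 2) = G t lam n u :=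
  tsum_congr fun w => chainF_nnnorm t lam n u w

lemma memℓp_chainF_iff (lam : V → ℂ) (n : ℕ) (u : V) :
    Memℓp (chainF t lam n u) 2 ↔ G t lam n u ≠ ⊤ := by
  rw [memℓp_two_iff, chainF_tsum]

lemma chainF_zero (lam : V → ℂ) (u : V) : chainF t lam 0 u = ⇑(evec u) := by
  funext w
  by_cases h : w = u
  · subst h
    rw [show (evec w) w = 1 from lp.single_apply_self 2 w 1]
    rw [chainF, if_pos (by exact rfl : w ∈ t.chin 0 w)]
    simp [DirectedTree.wprod]
  · rw [show (evec u) w = 0 from lp.single_apply_ne 2 u 1 h]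
    rw [chainF, if_neg (by rw [chin_zero]; simpa using h)]

lemma lamLin_apply (lam : V → ℂ) (f : V → ℂ) (v : V) :
    lamLin t lam f v = if t.hasPar v then lam v * f (t.par v) else 0 := rfl

lemma lamLin_chainF (lam : V → ℂ) (n : ℕ) (u : V) :
    lamLin t lam (chainF t lam n u) = chainF t lam (n + 1) u := by
  funext v
  have hun : v ∉ t.chin (n + 1) u → ¬ t.hasPar v ∨ t.par v ∉ t.chin n u := by
    intro hv
    by_cases hp : t.hasPar v
    · exact Or.inr fun hx => hv ⟨t.par v, hx, E_par t hp⟩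
    · exact Or.inl hp
  simp only [lamLin_apply, chainF]
  by_cases hp : t.hasPar v
  · rw [if_pos hp]
    by_cases hv : v ∈ t.chin (n + 1) u
    · rw [if_pos hv]
      obtain ⟨x, hx, hE⟩ : ∃ x ∈ t.chin n u, t.E x v := hv
      have hpar : t.par v = x := par_eq t hE
      rw [wprod_succ' t lam n v, hpar, if_pos hx]
    · rcases hun hv with h | h
      · exact absurd hp h
      · rw [if_neg hv, if_neg h, mul_zero]
  · rw [if_neg hp]
    have hv : v ∉ t.chin (n + 1) u := by
      intro hv
      obtain ⟨x, _, hE⟩ : ∃ x ∈ t.chin n u, t.E x v := hv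
      exact hp ⟨x, hE⟩
    rw [if_neg hv]

lemma mem_shiftDom_iff (f : H2 V) :
    f ∈ (shift t lam).domain ↔ Memℓp (lamLin t lam ⇑f) 2 := Iff.rfl

lemma shift_apply_coe (f : H2 V) (hf : f ∈ (shift t lam).domain) :
    ⇑((shift t lam) ⟨f, hf⟩) = lamLin t lam ⇑f := rfl

lemma norm_sq_mk (f : V → ℂ) (h : Memℓp f 2) :
    ENNReal.ofReal (‖(⟨f, h⟩ : H2 V)‖ ^ 2) = ∑' w : V, ((‖f w‖₊ : ℝ≥0∞)) ^ 2 :=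
  norm_sq_eq _

lemma iter_chain (u : V) (h : ∀ k, Memℓp (chainF t lam k u) 2) :
    ∀ n k : ℕ, iterMem (shift t lam) n (⟨chainF t lam k u, h k⟩ : H2 V) ∧
      iterApp (shift t lam) n (⟨chainF t lam k u, h k⟩ : H2 V)
        = (⟨chainF t lam (k + n) u, h (k + n)⟩ : H2 V) := by
  intro n
  induction n with
  | zero => intro k; exact ⟨trivial, rfl⟩
  | succ n ih =>
      intro k
      have hdom : (⟨chainF t lam k u, h k⟩ : H2 V) ∈ (shift t lam).domain := by
        rw [mem_shiftDom_iff]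
        show Memℓp (lamLin t lam (chainF t lam k u)) 2
        rw [lamLin_chainF]
        exact h (k + 1)
      have happ : (shift t lam) ⟨_, hdom⟩ = (⟨chainF t lam (k + 1) u, h (k + 1)⟩ : H2 V) := by
        apply lp.ext
        rw [shift_apply_coe]
        show lamLin t lam (chainF t lam k u) = chainF t lam (k + 1) u
        exact lamLin_chainF t lam k u
      constructor
      · exact ⟨hdom, by rw [happ]; exact (ih (k + 1)).1⟩
      · show iterApp (shift t lam) (n + 1) _ = _
        rw [iterApp, dif_pos hdom, happ, (ih (k + 1)).2,
          show k + 1 + n = k + (n + 1) from by omega]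

lemma iter_mem_chainF (u : V) :
    ∀ (n k : ℕ) (f : H2 V), ⇑f = chainF t lam k u → iterMem (shift t lam) n f →
      ∀ j, j ≤ n → Memℓp (chainF t lam (k + j) u) 2 := by
  intro n
  induction n with
  | zero =>
      intro k f hf _ j hj
      have hj0 : j = 0 := Nat.le_zero.mp hj
      subst hj0
      rw [show k + 0 = k from rfl, ← hf]
      exact lp.memℓp f
  | succ n ih =>
      intro k f hf hmem j hj
      have hmem' : ∃ hd : f ∈ (shift t lam).domain,
          iterMem (shift t lam) n ((shift t lam) ⟨f, hd⟩) := hmem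
      obtain ⟨hdom, hrest⟩ := hmem'
      rcases Nat.eq_zero_or_pos j with rfl | hj'
      · rw [show k + 0 = k from rfl, ← hf]
        exact lp.memℓp f
      · obtain ⟨j', rfl⟩ : ∃ j', j = j' + 1 := ⟨j - 1, by omega⟩
        have hcoe : ⇑((shift t lam) ⟨f, hdom⟩) = chainF t lam (k + 1) u := by
          rw [shift_apply_coe, hf, lamLin_chainF]
        have hres := ih (k + 1) _ hcoe hrest j' (by omega)
        rwa [show k + 1 + j' = k + (j' + 1) from by omega] at hres

lemma iterMem_zero : ∀ n : ℕ, iterMem (shift t lam) n (0 : H2 V) := by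
  intro n
  induction n with
  | zero => trivial
  | succ n ih =>
      have hdom : (0 : H2 V) ∈ (shift t lam).domain := Submodule.zero_mem _
      refine ⟨hdom, ?_⟩
      have h0 : (⟨(0 : H2 V), hdom⟩ : (shift t lam).domain) = 0 := rfl
      rw [h0, LinearPMap.map_zero]
      exact ih

lemma iterMem_add : ∀ (n : ℕ) (x y : H2 V), iterMem (shift t lam) n x →
    iterMem (shift t lam) n y → iterMem (shift t lam) n (x + y) := by
  intro n
  induction n with
  | zero => intro x y _ _; trivial
  | succ n ih =>
      intro x y hx hy
      have hx' : ∃ hd : x ∈ (shift t lam).domain,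
          iterMem (shift t lam) n ((shift t lam) ⟨x, hd⟩) := hx
      have hy' : ∃ hd : y ∈ (shift t lam).domain,
          iterMem (shift t lam) n ((shift t lam) ⟨y, hd⟩) := hy
      obtain ⟨hdx, hx2⟩ := hx'
      obtain ⟨hdy, hy2⟩ := hy'
      have hdom : x + y ∈ (shift t lam).domain := Submodule.add_mem _ hdx hdy
      refine ⟨hdom, ?_⟩
      have he : (⟨x + y, hdom⟩ : (shift t lam).domain) = ⟨x, hdx⟩ + ⟨y, hdy⟩ := rfl
      rw [he, LinearPMap.map_add]
      exact ih _ _ hx2 hy2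

lemma iterMem_smul : ∀ (n : ℕ) (c : ℂ) (x : H2 V), iterMem (shift t lam) n x →
    iterMem (shift t lam) n (c • x) := by
  intro n
  induction n with
  | zero => intro c x _; trivial
  | succ n ih =>
      intro c x hx
      have hx' : ∃ hd : x ∈ (shift t lam).domain,
          iterMem (shift t lam) n ((shift t lam) ⟨x, hd⟩) := hx
      obtain ⟨hdx, hx2⟩ := hx'
      have hdom : c • x ∈ (shift t lam).domain := Submodule.smul_mem _ c hdx
      refine ⟨hdom, ?_⟩
      have he : (⟨c • x, hdom⟩ : (shift t lam).domain) = c • ⟨x, hdx⟩ := rfl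
      rw [he, LinearPMap.map_smul]
      exact ih c _ hx2

lemma spanDomInfty_iff (hprob : ∀ u : V, IsProbabilityMeasure (μ u))
    (hpos : ∀ u : V, μ u (Set.Iio 0) = 0) (hcons : ∀ u : V, Consistent t lam μ ε u) :
    spanDomInfty t lam ↔
      ∀ (n : ℕ) (u : V), (∫⁻ s, ENNReal.ofReal s ^ n ∂(μ u)) < ⊤ := by
  constructor
  · intro hs n u
    have h1 : iterMem (shift t lam) n (evec u) :=
      hs (evec u) (Submodule.subset_span ⟨u, rfl⟩) n
    have h2 := iter_mem_chainF t lam u n 0 (evec u) (chainF_zero t lam u).symm h1 n le_rfl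
    rw [show (0:ℕ) + n = n from by omega] at h2
    rw [moment_eq t lam μ ε hprob hpos hcons n u, lt_top_iff_ne_top]
    exact (memℓp_chainF_iff t lam n u).mp h2
  · intro hfin
    have hml : ∀ (u : V) (k : ℕ), Memℓp (chainF t lam k u) 2 := fun u k =>
      (memℓp_chainF_iff t lam k u).mpr
        (by rw [← moment_eq t lam μ ε hprob hpos hcons k u]; exact (hfin k u).ne)
    intro f hf n
    revert n
    refine Submodule.span_induction ?_ ?_ ?_ ?_ hf
    · rintro x ⟨u, rfl⟩ n
      have he : (⟨chainF t lam 0 u, hml u 0⟩ : H2 V) = evec u :=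
        lp.ext (chainF_zero t lam u)
      rw [← he]
      exact (iter_chain t lam u (hml u) n 0).1
    · exact fun n => iterMem_zero t lam n
    · exact fun x y _ _ hx hy n => iterMem_add t lam n x y (hx n) (hy n)
    · exact fun c x _ hx n => iterMem_smul t lam n c x (hx n)

lemma iterApp_evec (u : V) (hml : ∀ k, Memℓp (chainF t lam k u) 2) (n : ℕ) :
    ENNReal.ofReal (‖iterApp (shift t lam) n (evec u)‖ ^ 2) = G t lam n u := by
  have he : (⟨chainF t lam 0 u, hml 0⟩ : H2 V) = evec u := lp.ext (chainF_zero t lam u)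
  have h2 := (iter_chain t lam u hml n 0).2
  rw [show (0:ℕ) + n = n from by omega] at h2
  rw [he] at h2
  rw [h2, norm_sq_mk, chainF_tsum]

lemma memℓp_of_domTop (hdom : (shift t lam).domain = ⊤) (u : V) :
    ∀ k, Memℓp (chainF t lam k u) 2 := by
  intro k
  induction k with
  | zero => rw [chainF_zero]; exact lp.memℓp (evec u)
  | succ k ih =>
      have hmem : (⟨chainF t lam k u, ih⟩ : H2 V) ∈ (shift t lam).domain := by
        rw [hdom]; trivial
      have h2 := (mem_shiftDom_iff t lam _).mp hmem
      have h3 : lamLin t lam ⇑(⟨chainF t lam k u, ih⟩ : H2 V) = chainF t lam (k + 1) u :=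
        lamLin_chainF t lam k u
      rwa [h3] at h2

lemma chain_norm_le (u : V) (hml : ∀ k, Memℓp (chainF t lam k u) 2) {C : ℝ}
    (hC0 : 0 ≤ C)
    (hC : ∀ f : (shift t lam).domain, ‖shift t lam f‖ ≤ C * ‖(f : H2 V)‖) :
    ∀ n, ‖(⟨chainF t lam n u, hml n⟩ : H2 V)‖ ≤ C ^ n := by
  intro n
  induction n with
  | zero =>
      have h0 : ENNReal.ofReal (‖(⟨chainF t lam 0 u, hml 0⟩ : H2 V)‖ ^ 2) = 1 := by
        rw [norm_sq_mk, chainF_tsum, G_zero]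
      have h1 := ENNReal.ofReal_eq_one.mp h0
      have h2 := norm_nonneg (⟨chainF t lam 0 u, hml 0⟩ : H2 V)
      rw [pow_zero]
      nlinarith
  | succ n ih =>
      have hdm : (⟨chainF t lam n u, hml n⟩ : H2 V) ∈ (shift t lam).domain := by
        rw [mem_shiftDom_iff]
        show Memℓp (lamLin t lam (chainF t lam n u)) 2
        rw [lamLin_chainF]
        exact hml (n + 1)
      have happ : (shift t lam) ⟨_, hdm⟩ = (⟨chainF t lam (n + 1) u, hml (n + 1)⟩ : H2 V) := by
        apply lp.ext
        rw [shift_apply_coe]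
        show lamLin t lam (chainF t lam n u) = chainF t lam (n + 1) u
        exact lamLin_chainF t lam n u
      rw [← happ]
      calc ‖(shift t lam) ⟨_, hdm⟩‖ ≤ C * ‖(⟨chainF t lam n u, hml n⟩ : H2 V)‖ := hC _
        _ ≤ C * C ^ n := mul_le_mul_of_nonneg_left ih hC0
        _ = C ^ (n + 1) := (pow_succ' C n).symm

lemma support_of_moments {ν : MeasureTheory.Measure ℝ} (hprob : IsProbabilityMeasure ν)
    (hneg : ν (Set.Iio 0) = 0) {M : ℝ} (hM : 0 ≤ M)
    (hmom : ∀ n : ℕ, ∫⁻ s, ENNReal.ofReal s ^ n ∂ν ≤ ENNReal.ofReal M ^ n) :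
    ν ((Set.Icc 0 M)ᶜ) = 0 := by
  have hM' : ∀ M' : ℝ, M < M' → ν (Set.Ioi M') = 0 := by
    intro M' hMM'
    have hM'pos : 0 < M' := lt_of_le_of_lt hM hMM'
    have hint : ∀ n : ℕ, ENNReal.ofReal M' ^ n * ν (Set.Ioi M') ≤ ENNReal.ofReal M ^ n := by
      intro n
      have hs1 : ENNReal.ofReal M' ^ n * ν (Set.Ioi M')
          = ∫⁻ _ in Set.Ioi M', ENNReal.ofReal M' ^ n ∂ν := (setLIntegral_const _ _).symm
      rw [hs1]
      calc ∫⁻ _ in Set.Ioi M', ENNReal.ofReal M' ^ n ∂ν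
          ≤ ∫⁻ s in Set.Ioi M', ENNReal.ofReal s ^ n ∂ν := by
            apply setLIntegral_mono (ENNReal.measurable_ofReal.pow_const _)
            intro s hs
            exact pow_le_pow_left' (ENNReal.ofReal_le_ofReal (le_of_lt hs)) n
        _ ≤ ∫⁻ s, ENNReal.ofReal s ^ n ∂ν := setLIntegral_le_lintegral _ _
        _ ≤ _ := hmom n
    by_contra hne
    have hrpos : 0 < (ν (Set.Ioi M')).toReal :=
      ENNReal.toReal_pos hne (measure_ne_top ν _)
    set r := (ν (Set.Ioi M')).toReal with hr
    have hreal : ∀ n : ℕ, M' ^ n * r ≤ M ^ n := by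
      intro n
      have h := hint n
      have hlhs : (ENNReal.ofReal M' ^ n * ν (Set.Ioi M')).toReal = M' ^ n * r := by
        rw [ENNReal.toReal_mul, ENNReal.toReal_pow, ENNReal.toReal_ofReal hM'pos.le]
      have hrhs : (ENNReal.ofReal M ^ n).toReal = M ^ n := by
        rw [ENNReal.toReal_pow, ENNReal.toReal_ofReal hM]
      have h2 := ENNReal.toReal_mono (ENNReal.pow_ne_top ENNReal.ofReal_ne_top) h
      rwa [hlhs, hrhs] at h2
    have hlt : M / M' < 1 := (div_lt_one hM'pos).mpr hMM'
    have hge : ∀ n : ℕ, r ≤ (M / M') ^ n := by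
      intro n
      rw [div_pow, le_div_iff₀ (pow_pos hM'pos n)]
      calc r * M' ^ n = M' ^ n * r := mul_comm _ _
        _ ≤ M ^ n := hreal n
    have htend : Filter.Tendsto (fun n : ℕ => (M / M') ^ n) Filter.atTop (nhds 0) :=
      tendsto_pow_atTop_nhds_zero_of_lt_one (div_nonneg hM hM'pos.le) hlt
    have hr0 : r ≤ 0 := ge_of_tendsto htend (Filter.Eventually.of_forall hge)
    linarith
  have hcompl : (Set.Icc (0:ℝ) M)ᶜ = Set.Iio 0 ∪ Set.Ioi M := by
    ext x
    simp only [Set.mem_compl_iff, Set.mem_Icc, not_and_or, not_le, Set.mem_union,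
      Set.mem_Iio, Set.mem_Ioi]
  rw [hcompl]
  apply measure_union_null hneg
  have hU : Set.Ioi M = ⋃ n : ℕ, Set.Ioi (M + 1 / (n + 1)) := by
    ext x
    simp only [Set.mem_Ioi, Set.mem_iUnion]
    constructor
    · intro hx
      obtain ⟨n, hn⟩ := exists_nat_one_div_lt (sub_pos.mpr hx)
      exact ⟨n, by linarith⟩
    · rintro ⟨n, hn⟩
      have hp : 0 < 1 / ((n:ℝ) + 1) := by positivity
      linarith
  rw [hU]
  apply measure_iUnion_null
  intro n
  apply hM'
  have hp : 0 < 1 / ((n:ℝ) + 1) := by positivity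
  linarith

lemma chi_sum_le (hprob : ∀ u : V, IsProbabilityMeasure (μ u))
    (hpos : ∀ u : V, μ u (Set.Iio 0) = 0) (hcons : ∀ u : V, Consistent t lam μ ε u)
    {M : ℝ} (hsupp : ∀ u : V, μ u ((Set.Icc 0 M)ᶜ) = 0) (u : V) :
    (∑' v : t.chi u, ENNReal.ofReal (‖lam (v:V)‖ ^ 2)) ≤ ENNReal.ofReal M := by
  haveI := hprob u
  have h1 : (∑' v : t.chi u, ENNReal.ofReal (‖lam (v:V)‖ ^ 2))
      = ∫⁻ s, ENNReal.ofReal s ^ 1 ∂(μ u) := by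
    rw [moment_rec t lam μ ε hprob hpos hcons u 0]
    apply tsum_congr; intro v
    rw [moment_zero μ hprob, mul_one]
  rw [h1]
  have hae : ∀ᵐ s ∂(μ u), ENNReal.ofReal s ^ 1 ≤ ENNReal.ofReal M := by
    rw [ae_iff]
    apply measure_mono_null ?_ (hsupp u)
    intro s hs
    simp only [Set.mem_setOf_eq, pow_one] at hs
    intro hmem
    exact hs (ENNReal.ofReal_le_ofReal hmem.2)
  calc ∫⁻ s, ENNReal.ofReal s ^ 1 ∂(μ u) ≤ ∫⁻ _, ENNReal.ofReal M ∂(μ u) :=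
        lintegral_mono_ae hae
    _ = ENNReal.ofReal M := by rw [lintegral_const, measure_univ, mul_one]

lemma lamLin_nnnorm_sum (f : V → ℂ) :
    (∑' v : V, ((‖lamLin t lam f v‖₊ : ℝ≥0∞)) ^ 2)
      = ∑' u : V, (∑' v : t.chi u, ENNReal.ofReal (‖lam (v:V)‖ ^ 2)) *
          ((‖f u‖₊ : ℝ≥0∞)) ^ 2 := by
  classical
  set A : V → V → ℝ≥0∞ := fun u v =>
    Set.indicator (t.chi u) (fun v => ENNReal.ofReal (‖lam v‖ ^ 2)) v *
      ((‖f u‖₊ : ℝ≥0∞)) ^ 2 with hA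
  have h1 : ∀ v : V, ((‖lamLin t lam f v‖₊ : ℝ≥0∞)) ^ 2 = ∑' u : V, A u v := by
    intro v
    by_cases hp : t.hasPar v
    · rw [tsum_eq_single (t.par v)]
      · rw [hA]
        simp only
        have hmem : v ∈ t.chi (t.par v) := E_par t hp
        rw [Set.indicator_of_mem hmem]
        rw [lamLin_apply, if_pos hp, nnnorm_mul, ENNReal.coe_mul, mul_pow,
          ← ofReal_norm_sq]
      · intro b hb
        rw [hA]
        simp only
        rw [Set.indicator_of_notMem, zero_mul]
        intro hmem
        exact hb (par_eq t hmem).symm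
    · rw [lamLin_apply, if_neg hp]
      rw [nnnorm_zero, ENNReal.coe_zero, zero_pow (by norm_num : (2:ℕ) ≠ 0)]
      symm
      apply ENNReal.tsum_eq_zero.mpr
      intro b
      rw [hA]
      simp only
      rw [Set.indicator_of_notMem, zero_mul]
      intro hmem
      exact hp ⟨b, hmem⟩
  have h2 : ∀ u : V, (∑' v : V, A u v)
      = (∑' v : t.chi u, ENNReal.ofReal (‖lam (v:V)‖ ^ 2)) * ((‖f u‖₊ : ℝ≥0∞)) ^ 2 := by
    intro u
    rw [hA]
    simp only
    rw [ENNReal.tsum_mul_right, ← tsum_subtype]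
  calc (∑' v : V, ((‖lamLin t lam f v‖₊ : ℝ≥0∞)) ^ 2) = ∑' v : V, ∑' u : V, A u v :=
        tsum_congr h1
    _ = ∑' u : V, ∑' v : V, A u v := ENNReal.tsum_comm
    _ = _ := tsum_congr h2


end Measures

end StmtAux


/-- moments of a consistent system of measures and the weighted shift. -/
theorem stmt15 {V : Type*} (t : Paper.DirectedTree V) (lam : V → ℂ)
    (μ : V → Measure ℝ) (ε : V → ℝ)
    (hprob : ∀ u : V, IsProbabilityMeasure (μ u)) (hpos : ∀ u : V, μ u (Set.Iio 0) = 0)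
    (hε : ∀ u : V, 0 ≤ ε u) (hcons : ∀ u : V, Consistent t lam μ ε u) :
    (∀ (u : V) (n : ℕ), 1 ≤ n →
      (∫⁻ s, ENNReal.ofReal s ^ n ∂(μ u))
        = ∑' v : t.chin n u, ENNReal.ofReal (‖t.wprod lam n (v : V)‖ ^ 2)) ∧
    (∀ (u : V) (n : ℕ), 1 ≤ n → t.chin n u = ∅ →
      ∀ v ∈ t.des u, μ v = Measure.dirac (0 : ℝ)) ∧
    (spanDomInfty t lam ↔
      ∀ (n : ℕ) (u : V), (∫⁻ s, ENNReal.ofReal s ^ n ∂(μ u)) < ⊤) ∧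
    (spanDomInfty t lam → ∀ (u : V) (n : ℕ),
      ENNReal.ofReal (‖iterApp (shift t lam) n (evec u)‖ ^ 2)
        = ∫⁻ s, ENNReal.ofReal s ^ n ∂(μ u)) ∧
    (((shift t lam).domain = ⊤ ∧
        ∃ C : ℝ, ∀ f : (shift t lam).domain, ‖shift t lam f‖ ≤ C * ‖(f : H2 V)‖) ↔
      ∃ M : ℝ, 0 ≤ M ∧ ∀ u : V, μ u ((Set.Icc 0 M)ᶜ) = 0) := by
  refine ⟨?_, ?_, ?_, ?_, ?_⟩
  · -- (i)
    intro u n _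
    rw [StmtAux.moment_eq t lam μ ε hprob hpos hcons n u, StmtAux.G_eq_tsum_subtype]
  · -- (ii)
    intro u n hn hempty v hv
    obtain ⟨k, hk⟩ : ∃ k, v ∈ t.chin k u := Set.mem_iUnion.mp hv
    exact StmtAux.mu_dirac_of_empty_chin t lam μ ε hprob hpos hcons n hn v
      (StmtAux.chin_des_empty t hempty hk)
  · -- (iii)
    exact StmtAux.spanDomInfty_iff t lam μ ε hprob hpos hcons
  · -- (iv)
    intro hs u n
    have hfin := (StmtAux.spanDomInfty_iff t lam μ ε hprob hpos hcons).mp hs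
    have hml : ∀ k, Memℓp (StmtAux.chainF t lam k u) 2 := fun k =>
      (StmtAux.memℓp_chainF_iff t lam k u).mpr
        (by rw [← StmtAux.moment_eq t lam μ ε hprob hpos hcons k u]; exact (hfin k u).ne)
    rw [StmtAux.iterApp_evec t lam u hml n,
      StmtAux.moment_eq t lam μ ε hprob hpos hcons n u]
  · -- (v)
    constructor
    · rintro ⟨hdom, C, hC⟩
      set C' := max C 0 with hC'
      have hC'0 : 0 ≤ C' := le_max_right _ _
      have hC'bound : ∀ f : (shift t lam).domain,
          ‖shift t lam f‖ ≤ C' * ‖(f : H2 V)‖ := by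
        intro f
        calc ‖shift t lam f‖ ≤ C * ‖(f : H2 V)‖ := hC f
          _ ≤ C' * ‖(f : H2 V)‖ :=
            mul_le_mul_of_nonneg_right (le_max_left _ _) (norm_nonneg _)
      refine ⟨C' ^ 2, sq_nonneg C', ?_⟩
      intro u
      have hml := StmtAux.memℓp_of_domTop t lam hdom u
      have hnorm := StmtAux.chain_norm_le t lam u hml hC'0 hC'bound
      have hmom : ∀ n : ℕ, ∫⁻ s, ENNReal.ofReal s ^ n ∂(μ u)
          ≤ ENNReal.ofReal (C' ^ 2) ^ n := by
        intro n
        have e1 : ∫⁻ s, ENNReal.ofReal s ^ n ∂(μ u)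
            = ENNReal.ofReal (‖(⟨StmtAux.chainF t lam n u, hml n⟩ : H2 V)‖ ^ 2) := by
          rw [StmtAux.moment_eq t lam μ ε hprob hpos hcons n u, StmtAux.norm_sq_mk,
            StmtAux.chainF_tsum]
        rw [e1]
        calc ENNReal.ofReal (‖(⟨StmtAux.chainF t lam n u, hml n⟩ : H2 V)‖ ^ 2)
            ≤ ENNReal.ofReal ((C' ^ n) ^ 2) :=
              ENNReal.ofReal_le_ofReal
                (pow_le_pow_left₀ (norm_nonneg _) (hnorm n) 2)
          _ = ENNReal.ofReal (C' ^ 2) ^ n := by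
              rw [← ENNReal.ofReal_pow (sq_nonneg C')]
              congr 1
              rw [← pow_mul, ← pow_mul, Nat.mul_comm]
      exact StmtAux.support_of_moments (hprob u) (hpos u) (sq_nonneg C') hmom
    · rintro ⟨M, hM, hsupp⟩
      have hbound := StmtAux.chi_sum_le t lam μ ε hprob hpos hcons hsupp
      have hkey : ∀ f : H2 V, (∑' v : V, ((‖lamLin t lam ⇑f v‖₊ : ℝ≥0∞)) ^ 2)
          ≤ ENNReal.ofReal M * ENNReal.ofReal (‖f‖ ^ 2) := by
        intro f
        rw [StmtAux.lamLin_nnnorm_sum, StmtAux.norm_sq_eq f]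
        calc ∑' u : V, (∑' v : t.chi u, ENNReal.ofReal (‖lam (v:V)‖ ^ 2)) *
              ((‖f u‖₊ : ℝ≥0∞)) ^ 2
            ≤ ∑' u : V, ENNReal.ofReal M * ((‖f u‖₊ : ℝ≥0∞)) ^ 2 :=
              ENNReal.tsum_le_tsum fun u => mul_le_mul_left (hbound u) _
          _ = ENNReal.ofReal M * ∑' u : V, ((‖f u‖₊ : ℝ≥0∞)) ^ 2 := ENNReal.tsum_mul_left
      have hdomtop : (shift t lam).domain = ⊤ := by
        rw [eq_top_iff]
        intro f _
        rw [StmtAux.mem_shiftDom_iff, StmtAux.memℓp_two_iff]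
        exact (lt_of_le_of_lt (hkey f)
          (ENNReal.mul_lt_top ENNReal.ofReal_lt_top ENNReal.ofReal_lt_top)).ne
      refine ⟨hdomtop, Real.sqrt M, ?_⟩
      intro f
      have hcoe : ENNReal.ofReal (‖shift t lam f‖ ^ 2)
          = ∑' v : V, ((‖lamLin t lam ⇑(f : H2 V) v‖₊ : ℝ≥0∞)) ^ 2 :=
        StmtAux.norm_sq_eq (shift t lam f)
      have h2 : ENNReal.ofReal (‖(f : H2 V)‖ ^ 2)
          = ∑' w : V, ((‖(f : H2 V) w‖₊ : ℝ≥0∞)) ^ 2 := StmtAux.norm_sq_eq _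
      have h1 : ENNReal.ofReal (‖shift t lam f‖ ^ 2)
          ≤ ENNReal.ofReal (M * ‖(f : H2 V)‖ ^ 2) := by
        rw [ENNReal.ofReal_mul hM, hcoe]
        exact hkey (f : H2 V)
      have h3 : ‖shift t lam f‖ ^ 2 ≤ M * ‖(f : H2 V)‖ ^ 2 :=
        (ENNReal.ofReal_le_ofReal_iff (by positivity)).mp h1
      have h4 := Real.sqrt_le_sqrt h3
      rwa [Real.sqrt_sq (norm_nonneg _), Real.sqrt_mul hM,
        Real.sqrt_sq (norm_nonneg _)] at h4
end
end

section
/- Let T be a directed tree with V° ≠ ∅ and let S_λ be a weighted shift on T with weights λ = {λ_v}_{v∈V°} all of which are nonzero. If S_λ is hyponormal, then T is leafless (that is, Chi(u) ≠ ∅ for every u ∈ V); in particular, S_λ is injective and V is countably infinite. -/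
open Filter
open scoped ENNReal InnerProductSpace ComplexConjugate

attribute [local instance] Classical.propDecidable

noncomputable section

open Paper MeasureTheory Filter
open scoped ENNReal



section Stmt19Aux

open Paper

variable {V : Type*} (t : Paper.DirectedTree V) (lam : V → ℂ)

lemma aux_E_par {v : V} (h : t.hasPar v) : t.E (t.par v) v := by
  rw [DirectedTree.par, dif_pos h]; exact h.choose_spec

lemma aux_par_eq {u v : V} (h : t.E u v) : t.par v = u :=
  t.par_unique (aux_E_par t ⟨u, h⟩) h

lemma aux_lamLin_apply (f : V → ℂ) (v : V) :
    Paper.lamLin t lam f v = if t.hasPar v then lam v * f (t.par v) else 0 := rfl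

lemma aux_shift_coe (x : (shift t lam).domain) :
    ⇑((shift t lam x : H2 V)) = Paper.lamLin t lam ⇑(x : H2 V) := rfl

lemma aux_mem_dom_iff (g : H2 V) :
    g ∈ (shift t lam).domain ↔ Memℓp (Paper.lamLin t lam ⇑g) 2 := Iff.rfl

lemma aux_continuous_eval (u : V) : Continuous fun g : Paper.H2 V => g u := by
  refine (LipschitzWith.of_dist_le_mul (K := 1) fun f g => ?_).continuous
  have h := lp.norm_apply_le_norm (E := fun _ : V => ℂ) (p := 2) two_ne_zero (f - g) u
  rw [lp.coeFn_sub] at h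
  simpa [dist_eq_norm] using h

lemma aux_evec_apply (u v : V) :
    (Paper.evec u : V → ℂ) v = if v = u then 1 else 0 := by
  classical
  simp only [Paper.evec]
  rw [lp.single_apply]
  split_ifs with h
  · subst h; simp
  · simp [Pi.single_apply, h]

lemma aux_inner_evec (u : V) (g : Paper.H2 V) :
    (inner ℂ (Paper.evec u) g : ℂ) = g u := by
  classical
  simp only [Paper.evec]
  rw [lp.inner_single_left]
  simp [RCLike.inner_apply]

lemma aux_exists_ne (hd : Dense ((shift t lam).domain : Set (H2 V))) (u : V) :
    ∃ f : (shift t lam).domain, ((f : H2 V) : V → ℂ) u ≠ 0 := by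
  by_contra h
  push_neg at h
  have hsub : ((shift t lam).domain : Set (H2 V)) ⊆ {g : H2 V | g u = 0} :=
    fun g hg => h ⟨g, hg⟩
  have hcl : IsClosed {g : Paper.H2 V | g u = 0} :=
    isClosed_eq (aux_continuous_eval u) continuous_const
  have hclos : closure ((shift t lam).domain : Set (H2 V)) ⊆ {g : H2 V | g u = 0} :=
    hcl.closure_subset_iff.mpr hsub
  have h1 : (Paper.evec u : H2 V) ∈ closure ((shift t lam).domain : Set (H2 V)) := hd _
  have h2 : (Paper.evec u : V → ℂ) u = 0 := hclos h1
  rw [aux_evec_apply] at h2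
  simp at h2

lemma aux_countable_reach {α : Type*} (r : α → α → Prop)
    (hN : ∀ a, {b | r a b}.Countable) (a₀ : α)
    (hall : ∀ b, Relation.ReflTransGen r a₀ b) : Countable α := by
  let A : ℕ → Set α := fun n => Nat.rec {a₀} (fun _ s => s ∪ ⋃ a ∈ s, {b | r a b}) n
  have hAsucc : ∀ n, A (n + 1) = A n ∪ ⋃ a ∈ A n, {b | r a b} := fun n => rfl
  have hc : ∀ n, (A n).Countable := by
    intro n
    induction n with
    | zero => exact Set.countable_singleton _
    | succ n ih =>
      rw [hAsucc]
      exact ih.union (ih.biUnion fun a _ => hN a)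
  have hmem : ∀ b, ∃ n, b ∈ A n := by
    intro b
    induction hall b with
    | refl => exact ⟨0, rfl⟩
    | tail hab hbc ih =>
      obtain ⟨n, hn⟩ := ih
      exact ⟨n + 1, by rw [hAsucc]; exact Or.inr (Set.mem_biUnion hn hbc)⟩
  have huniv : (Set.univ : Set α).Countable :=
    Set.Countable.mono (fun b _ => Set.mem_iUnion.mpr (hmem b)) (Set.countable_iUnion hc)
  exact Set.countable_univ_iff.mp huniv

end Stmt19Aux

/-- hyponormal weighted shifts with nonzero weights live on leafless trees. -/
theorem stmt19 {V : Type*} (t : Paper.DirectedTree V) (lam : V → ℂ)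
    (hV : ∃ v : V, t.hasPar v) (hnz : ∀ v : V, t.hasPar v → lam v ≠ 0)
    (hhyp : Hyponormal (shift t lam)) :
    (∀ u : V, (t.chi u).Nonempty) ∧
    (Function.Injective fun f : (shift t lam).domain => shift t lam f) ∧
    Countable V ∧ Infinite V := by
  classical
  obtain ⟨hdense, hdomle, hnle⟩ := hhyp
  -- Step 1: leafless
  have hleaf : ∀ u : V, (t.chi u).Nonempty := by
    intro u
    by_contra hne
    rw [Set.not_nonempty_iff_eq_empty] at hne
    have hnochild : ∀ v : V, ¬ t.E u v := by
      intro v hv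
      have : v ∈ t.chi u := hv
      rw [hne] at this
      exact this
    by_cases hp : t.hasPar u
    · -- u ∈ V°, leaf: contradiction with hyponormality
      -- e_u ∈ D(S) and S e_u = 0
      have hLz : Paper.lamLin t lam ⇑(Paper.evec u : Paper.H2 V) = 0 := by
        funext v
        rw [aux_lamLin_apply, Pi.zero_apply]
        split_ifs with hv
        · have hne' : t.par v ≠ u := by
            intro he
            exact hnochild v (he ▸ aux_E_par t hv)
          rw [aux_evec_apply, if_neg hne', mul_zero]
        · rfl
      have hdom : (Paper.evec u : Paper.H2 V) ∈ (shift t lam).domain := by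
        rw [aux_mem_dom_iff, hLz]
        exact zero_memℓp
      have hSzero : shift t lam ⟨Paper.evec u, hdom⟩ = 0 := by
        apply lp.ext
        rw [aux_shift_coe]
        simp only [lp.coeFn_zero]
        exact hLz
      have hmem' : (Paper.evec u : Paper.H2 V) ∈ (shift t lam).adjoint.domain := hdomle hdom
      have hnorm := hnle (Paper.evec u) hdom hmem'
      rw [hSzero] at hnorm
      have hadj : (shift t lam).adjoint ⟨Paper.evec u, hmem'⟩ = 0 := by
        rw [← norm_le_zero_iff]
        simpa using hnorm
      have hform := LinearPMap.adjoint_isFormalAdjoint (T := shift t lam) hdense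
      obtain ⟨f, hf⟩ := aux_exists_ne t lam hdense (t.par u)
      have hinner := hform ⟨Paper.evec u, hmem'⟩ f
      rw [hadj] at hinner
      simp only [inner_zero_left] at hinner
      rw [aux_inner_evec] at hinner
      have : (⇑((shift t lam f : Paper.H2 V))) u = 0 := hinner.symm
      rw [aux_shift_coe, aux_lamLin_apply, if_pos hp] at this
      exact hf (by
        rcases mul_eq_zero.mp this with h | h
        · exact absurd h (hnz u hp)
        · exact h)
    · -- u has neither children nor a parent: contradicts connectivity
      obtain ⟨w, hw⟩ := hV
      have hwne : w ≠ u := fun he => hp (he ▸ hw)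
      rcases (t.connected u w).cases_head with h | ⟨c, hc, _⟩
      · exact hwne h.symm
      · rcases hc with h | h
        · exact hnochild c h
        · exact hp ⟨c, h⟩
  -- Step 2: injectivity
  have hinj : Function.Injective fun f : (shift t lam).domain => shift t lam f := by
    intro f g h
    simp only at h
    have h0 : shift t lam (f - g) = 0 := by
      rw [LinearPMap.map_sub, h, sub_self]
    have hz : ∀ v : V, Paper.lamLin t lam (⇑((f - g : (shift t lam).domain) : Paper.H2 V)) v = 0 := by
      intro v
      have := congrArg (fun x : Paper.H2 V => (⇑x) v) h0
      simpa [aux_shift_coe, lp.coeFn_zero] using this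
    have hco : ∀ u : V, (⇑((f - g : (shift t lam).domain) : Paper.H2 V)) u = 0 := by
      intro u
      obtain ⟨v, hv⟩ := hleaf u
      have hpv : t.hasPar v := ⟨u, hv⟩
      have := hz v
      rw [aux_lamLin_apply, if_pos hpv, aux_par_eq t hv] at this
      rcases mul_eq_zero.mp this with h' | h'
      · exact absurd h' (hnz v hpv)
      · exact h'
    have : ((f - g : (shift t lam).domain) : Paper.H2 V) = 0 := by
      apply lp.ext
      funext u
      rw [lp.coeFn_zero]
      exact hco u
    have : (f : Paper.H2 V) = g := by
      have h' : ((f : Paper.H2 V) - g) = 0 := by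
        rw [← this]; rfl
      exact sub_eq_zero.mp h'
    exact Subtype.ext this
  -- Step 3: countability
  have hchic : ∀ u : V, (t.chi u).Countable := by
    intro u
    obtain ⟨f, hf⟩ := aux_exists_ne t lam hdense u
    have hmf : Memℓp (Paper.lamLin t lam ⇑(f : Paper.H2 V)) 2 := f.2
    have hsum : Summable fun v : V => ‖Paper.lamLin t lam (⇑(f : Paper.H2 V)) v‖ ^ (2 : ℝ≥0∞).toReal :=
      (memℓp_gen_iff (by norm_num)).mp hmf
    have hsub := hsum.subtype (t.chi u)
    have hcsupp := hsub.countable_support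
    have hsupp : Function.support
        ((fun v : V => ‖Paper.lamLin t lam (⇑(f : Paper.H2 V)) v‖ ^ (2 : ℝ≥0∞).toReal) ∘
          (Subtype.val : (t.chi u) → V))
        = Set.univ := by
      rw [Set.eq_univ_iff_forall]
      intro v
      have hv : t.E u ↑v := v.2
      have hpv : t.hasPar (↑v : V) := ⟨u, hv⟩
      have hval : Paper.lamLin t lam (⇑(f : Paper.H2 V)) ↑v
          = lam ↑v * (⇑(f : Paper.H2 V)) u := by
        rw [aux_lamLin_apply, if_pos hpv, aux_par_eq t hv]
      have hnz' : Paper.lamLin t lam (⇑(f : Paper.H2 V)) ↑v ≠ 0 := by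
        rw [hval]
        exact mul_ne_zero (hnz _ hpv) hf
      have hpos : (0:ℝ) < ‖Paper.lamLin t lam (⇑(f : Paper.H2 V)) ↑v‖ :=
        norm_pos_iff.mpr hnz'
      simp only [Function.mem_support, Function.comp_apply]
      exact ne_of_gt (Real.rpow_pos_of_pos hpos _)
    replace hcsupp : (Set.univ : Set (t.chi u)).Countable := by
      exact hcsupp.mono hsupp.ge
    have : Countable (t.chi u) := Set.countable_univ_iff.mp hcsupp
    exact Set.countable_coe_iff.mp this
  obtain ⟨a₀, _⟩ := hV
  have hcV : Countable V := by
    apply aux_countable_reach (fun a b => t.E a b ∨ t.E b a) _ a₀ (t.connected a₀)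
    intro a
    have h1 : {b | t.E a b ∨ t.E b a} = t.chi a ∪ {b | t.E b a} := rfl
    rw [h1]
    refine (hchic a).union ?_
    refine Set.Subsingleton.countable ?_
    intro b₁ h₁ b₂ h₂
    exact t.par_unique h₁ h₂
  -- Step 4: infiniteness
  have hInf : Infinite V := by
    choose c hc using hleaf
    have htrans : ∀ (x : V) (k : ℕ), Relation.TransGen t.E x (c^[k+1] x) := by
      intro x k
      induction k with
      | zero => simpa using Relation.TransGen.single (hc x)
      | succ k ih =>
        rw [Function.iterate_succ_apply']
        exact ih.tail (hc _)
    have key : ∀ m n : ℕ, m < n → c^[m] a₀ ≠ c^[n] a₀ := by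
      intro m n hmn he
      obtain ⟨k, hk⟩ : ∃ k, n - m = k + 1 := ⟨n - m - 1, by omega⟩
      have hfix : c^[k+1] (c^[m] a₀) = c^[m] a₀ := by
        rw [← hk, ← Function.iterate_add_apply, Nat.sub_add_cancel hmn.le, ← he]
      have h2 := htrans (c^[m] a₀) k
      rw [hfix] at h2
      exact t.noCircuits _ h2
    have hinjc : Function.Injective fun n : ℕ => c^[n] a₀ := by
      intro m n h
      by_contra hne
      rcases Nat.lt_or_ge m n with hlt | hge
      · exact key m n hlt h
      · exact key n m (lt_of_le_of_ne hge (Ne.symm hne)) h.symm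
    exact Infinite.of_injective _ hinjc
  exact ⟨hleaf, hinj, hcV, hInf⟩
end
end
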